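/- Let L be a Lie algebra over a field F and let b_1, …, b_n ∈ L be such that the operators ad(b_1), …, ad(b_n) pairwise commute and each b_i is a sandwich of L. Let U_k = U_k(ad(b_1), …, ad(b_n)) and suppose U_3 = U_4 = 0. Then for arbitrary elements y_1, y_2 ∈ L one has ad(y_1 U_2) ∘ ad(y_2 U_2) = U_2 ∘ ad(y_1) ∘ ad(y_2) ∘ U_2 (equality of operators on L, where y U_2 denotes the image of y under U_2, and compositions act in the listed order). -/

import Mathlib

/-- The divided-power operator `U_k(d_1, …, d_n)`: the sum over all `k`-element subsets
`{i_1 < … < i_k}` of `{1, …, n}` of the compositions `d_{i_1} ∘ ⋯ ∘ d_{i_k}`.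
`U_0` is the identity and `U_k = 0` for `k > n`. -/
noncomputable def Uop {F : Type*} {A : Type*} [Field F] [AddCommGroup A] [Module F A]
    {n : ℕ} (d : Fin n → Module.End F A) (k : ℕ) : Module.End F A :=
  ∑ S ∈ Finset.powersetCard k (Finset.univ : Finset (Fin n)),
    ((S.sort (· ≤ ·)).map d).prod

/-- `b` is a sandwich of the Lie algebra `L`. -/
def IsSandwich (F : Type*) {L : Type*} [Field F] [LieRing L] [LieAlgebra F L] (b : L) : Prop :=
  LieAlgebra.ad F L b * LieAlgebra.ad F L b = 0 ∧
    ∀ c : L, LieAlgebra.ad F L b * LieAlgebra.ad F L c * LieAlgebra.ad F L b = 0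

open Finset

section Aux

variable {F : Type*} {A : Type*} [Field F] [AddCommGroup A] [Module F A]
  {n : ℕ} (d : Fin n → Module.End F A)

/-- product of the `d i`, `i ∈ S`, in sorted order -/
noncomputable def Pprod (S : Finset (Fin n)) : Module.End F A :=
  ((S.sort (· ≤ ·)).map d).prod

lemma Uop_eq_sum (k : ℕ) : Uop d k = ∑ S ∈ powersetCard k univ, Pprod d S := rfl

lemma Pprod_empty : Pprod d (∅ : Finset (Fin n)) = 1 := by simp [Pprod]

lemma Uop_zero : Uop d 0 = 1 := by
  rw [Uop_eq_sum, Finset.powersetCard_zero, Finset.sum_singleton, Pprod_empty]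

variable (hc : ∀ i j, Commute (d i) (d j))
include hc

lemma Pprod_eq_noncommProd (S : Finset (Fin n)) :
    Pprod d S = S.noncommProd d (fun i _ j _ _ => hc i j) := by
  have key : ∀ (M : Multiset (Module.End F A)) (hM : {x | x ∈ M}.Pairwise Commute),
      M = (((S.sort (· ≤ ·)).map d : List (Module.End F A)) : Multiset (Module.End F A)) →
      M.noncommProd hM = ((S.sort (· ≤ ·)).map d).prod := by
    intro M hM hEq
    subst hEq
    exact Multiset.noncommProd_coe _ _
  refine (key _ _ ?_).symm
  rw [show S.val = ((S.sort (· ≤ ·) : List (Fin n)) : Multiset (Fin n)) from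
    (Finset.sort_eq S _).symm, Multiset.map_coe]

lemma Pprod_insert {i : Fin n} {S : Finset (Fin n)} (hi : i ∉ S) :
    Pprod d (insert i S) = d i * Pprod d S := by
  rw [Pprod_eq_noncommProd d hc, Pprod_eq_noncommProd d hc]
  exact Finset.noncommProd_insert_of_notMem _ _ _ _ hi

lemma Commute_Pprod (x : Module.End F A) (S : Finset (Fin n))
    (h : ∀ i ∈ S, Commute x (d i)) : Commute x (Pprod d S) := by
  rw [Pprod_eq_noncommProd d hc]
  exact Finset.noncommProd_commute _ _ _ _ h

lemma Pprod_union {S T : Finset (Fin n)} (h : Disjoint S T) :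
    Pprod d (S ∪ T) = Pprod d S * Pprod d T := by
  rw [Pprod_eq_noncommProd d hc, Pprod_eq_noncommProd d hc, Pprod_eq_noncommProd d hc]
  exact Finset.noncommProd_union_of_disjoint h _ _

lemma Pprod_erase {i : Fin n} {S : Finset (Fin n)} (hi : i ∈ S) :
    Pprod d S = d i * Pprod d (S.erase i) := by
  conv_lhs => rw [show S = insert i (S.erase i) from (Finset.insert_erase hi).symm]
  exact Pprod_insert d hc (Finset.notMem_erase i S)

lemma Pprod_erase' {i : Fin n} {S : Finset (Fin n)} (hi : i ∈ S) :
    Pprod d S = Pprod d (S.erase i) * d i := by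
  rw [Pprod_erase d hc hi]
  exact (Commute_Pprod d hc (d i) _ (fun j _ => hc i j)).eq

lemma Pprod_mid_zero {S T : Finset (Fin n)} (X : Module.End F A)
    (h : ¬ Disjoint S T) (hz : ∀ i ∈ S ∩ T, d i * X * d i = 0) :
    Pprod d S * X * Pprod d T = 0 := by
  obtain ⟨i, hiS, hiT⟩ := Finset.not_disjoint_iff.mp h
  rw [Pprod_erase' d hc hiS, Pprod_erase d hc hiT]
  have : Pprod d (S.erase i) * d i * X * (d i * Pprod d (T.erase i)) =
      Pprod d (S.erase i) * (d i * X * d i) * Pprod d (T.erase i) := by noncomm_ring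
  rw [this, hz i (Finset.mem_inter.mpr ⟨hiS, hiT⟩), mul_zero, zero_mul]

lemma Pprod_mul_zero {S T : Finset (Fin n)} (h : ¬ Disjoint S T)
    (hz : ∀ i, d i * d i = 0) : Pprod d S * Pprod d T = 0 := by
  obtain ⟨i, hiS, hiT⟩ := Finset.not_disjoint_iff.mp h
  rw [Pprod_erase' d hc hiS, Pprod_erase d hc hiT]
  have : Pprod d (S.erase i) * d i * (d i * Pprod d (T.erase i)) =
      Pprod d (S.erase i) * (d i * d i) * Pprod d (T.erase i) := by noncomm_ring
  rw [this, hz i, mul_zero, zero_mul]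

end Aux

section Reindex

/-- reindexing sums over pairs of disjoint sets as sums over (k-set, m-subset) pairs,
given that overlapping pairs contribute zero. -/
lemma sum_reindex {n : ℕ} {M : Type*} [AddCommMonoid M] (k m : ℕ) (hm : m ≤ k)
    (f : Finset (Fin n) → Finset (Fin n) → M)
    (hf : ∀ S T, ¬ Disjoint S T → f S T = 0) :
    ∑ S ∈ powersetCard (k - m) (univ : Finset (Fin n)), ∑ T ∈ powersetCard m univ, f S T =
      ∑ W ∈ powersetCard k (univ : Finset (Fin n)), ∑ T ∈ powersetCard m W, f (W \ T) T := by
  classical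
  rw [← Finset.sum_product' (powersetCard (k - m) univ) (powersetCard m univ) f,
    Finset.sum_sigma' (powersetCard k (univ : Finset (Fin n))) _ (fun W T => f (W \ T) T)]
  rw [← Finset.sum_filter_of_ne (p := fun p => Disjoint p.1 p.2)
    (fun p _ hne => by by_contra h; exact hne (hf p.1 p.2 h))]
  refine Finset.sum_nbij' (i := fun p => (⟨p.1 ∪ p.2, p.2⟩ : Σ _ : Finset (Fin n), Finset (Fin n)))
    (j := fun q => (q.1 \ q.2, q.2)) ?_ ?_ ?_ ?_ ?_
  · rintro ⟨S, T⟩ hST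
    simp only [Finset.mem_filter, Finset.mem_product, mem_powersetCard] at hST
    obtain ⟨⟨⟨-, hScard⟩, ⟨-, hTcard⟩⟩, hdisj⟩ := hST
    simp only [Finset.mem_sigma, mem_powersetCard]
    refine ⟨⟨Finset.subset_univ _, ?_⟩, Finset.subset_union_right, hTcard⟩
    rw [Finset.card_union_of_disjoint hdisj, hScard, hTcard]
    omega
  · rintro ⟨W, T⟩ hWT
    simp only [Finset.mem_sigma, mem_powersetCard] at hWT
    obtain ⟨⟨-, hWcard⟩, hTW, hTcard⟩ := hWT
    simp only [Finset.mem_filter, Finset.mem_product, mem_powersetCard]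
    refine ⟨⟨⟨Finset.subset_univ _, ?_⟩, Finset.subset_univ _, hTcard⟩, Finset.sdiff_disjoint⟩
    rw [Finset.card_sdiff_of_subset hTW, hWcard, hTcard]
  · rintro ⟨S, T⟩ hST
    simp only [Finset.mem_filter, Finset.mem_product, mem_powersetCard] at hST
    simp [Finset.union_sdiff_cancel_right hST.2]
  · rintro ⟨W, T⟩ hWT
    simp only [Finset.mem_sigma, mem_powersetCard] at hWT
    simp [Finset.sdiff_union_of_subset hWT.2.1]
  · rintro ⟨S, T⟩ hST
    simp only [Finset.mem_filter, Finset.mem_product, mem_powersetCard] at hST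
    simp [Finset.union_sdiff_cancel_right hST.2]

end Reindex

section Lie

variable {F : Type*} {L : Type*} [Field F] [LieRing L] [LieAlgebra F L]
  {n : ℕ} (b : Fin n → L)

attribute [local instance] LieRing.ofAssociativeRing

local notation "dd" => fun i => LieAlgebra.ad F L (b i)

variable (hc : ∀ i j, Commute (LieAlgebra.ad F L (b i)) (LieAlgebra.ad F L (b j)))
include hc

lemma ad_Pprod (S : Finset (Fin n)) (y : L) :
    LieAlgebra.ad F L ((Pprod dd S) y) =
      ∑ T ∈ S.powerset, ((-1 : ℤ) ^ T.card) •
        (Pprod dd (S \ T) * LieAlgebra.ad F L y * Pprod dd T) := by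
  classical
  induction S using Finset.induction_on generalizing y with
  | empty => simp [Pprod_empty, Module.End.one_apply]
  | @insert i S hi IH =>
      have hL : (Pprod dd (insert i S)) y = (LieAlgebra.ad F L (b i)) ((Pprod dd S) y) := by
        rw [Pprod_insert dd hc hi]; rfl
      have hinj : ∀ t1 ∈ S.powerset, ∀ t2 ∈ S.powerset, insert i t1 = insert i t2 → t1 = t2 := by
        intro t1 h1 t2 h2 heq
        rw [Finset.mem_powerset] at h1 h2
        have e1 : t1 = (insert i t1).erase i := (Finset.erase_insert (fun h => hi (h1 h))).symm
        rw [e1, heq, Finset.erase_insert (fun h => hi (h2 h))]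
      have hdis : Disjoint S.powerset (S.powerset.image (insert i)) := by
        rw [Finset.disjoint_left]
        intro T hT hT'
        rw [Finset.mem_powerset] at hT
        obtain ⟨t, -, rfl⟩ := Finset.mem_image.mp hT'
        exact hi (hT (Finset.mem_insert_self i t))
      rw [hL, LieAlgebra.ad_apply, LieHom.map_lie, Ring.lie_def, IH, Finset.mul_sum,
        Finset.sum_mul, sub_eq_add_neg, ← Finset.sum_neg_distrib, Finset.powerset_insert,
        Finset.sum_union hdis, Finset.sum_image hinj]
      congr 1
      · refine Finset.sum_congr rfl fun T hT => ?_
        rw [Finset.mem_powerset] at hT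
        have hiT : i ∉ T := fun h => hi (hT h)
        rw [mul_smul_comm, Finset.insert_sdiff_of_notMem _ hiT, Pprod_insert dd hc
          (fun h => hi (Finset.mem_sdiff.mp h).1)]
        exact congrArg (fun t => ((-1:ℤ) ^ T.card) • t) (by noncomm_ring)
      · refine Finset.sum_congr rfl fun T hT => ?_
        rw [Finset.mem_powerset] at hT
        have hiT : i ∉ T := fun h => hi (hT h)
        have h1 : insert i S \ insert i T = S \ T := by
          ext j; simp only [Finset.mem_sdiff, Finset.mem_insert]
          constructor
          · rintro ⟨hj | hj, hj2⟩
            · exact absurd (Or.inl hj) hj2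
            · exact ⟨hj, fun h => hj2 (Or.inr h)⟩
          · rintro ⟨hj, hj2⟩
            exact ⟨Or.inr hj, by rintro (rfl | h); exacts [hi hj, hj2 h]⟩
        rw [h1, Finset.card_insert_of_notMem hiT, pow_succ,
          Pprod_insert dd hc hiT,
          ((Commute_Pprod dd hc (LieAlgebra.ad F L (b i)) T (fun j _ => hc i j)).eq),
          show ((-1 : ℤ) ^ T.card * -1) = -((-1 : ℤ) ^ T.card) by ring, neg_smul, smul_mul_assoc, mul_assoc]

variable (hsand : ∀ i : Fin n, IsSandwich F (b i))
include hsand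

lemma Uop_mul_Uop (a m : ℕ) :
    Uop dd a * Uop dd m = ((a + m).choose m) • Uop dd (a + m) := by
  classical
  have hf : ∀ S T : Finset (Fin n), ¬ Disjoint S T → Pprod dd S * Pprod dd T = 0 :=
    fun S T h => Pprod_mul_zero dd hc h (fun i => (hsand i).1)
  have hre := sum_reindex (a + m) m (Nat.le_add_left m a)
    (fun S T => Pprod dd S * Pprod dd T) hf
  rw [Nat.add_sub_cancel] at hre
  rw [Uop_eq_sum, Uop_eq_sum, Finset.sum_mul]
  simp_rw [Finset.mul_sum]
  rw [hre]
  have step : ∀ W ∈ powersetCard (a + m) (univ : Finset (Fin n)),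
      ∑ T ∈ powersetCard m W, Pprod dd (W \ T) * Pprod dd T
        = ((a + m).choose m) • Pprod dd W := by
    intro W hW
    rw [mem_powersetCard] at hW
    have : ∀ T ∈ powersetCard m W, Pprod dd (W \ T) * Pprod dd T = Pprod dd W := by
      intro T hT
      rw [mem_powersetCard] at hT
      rw [← Pprod_union dd hc Finset.sdiff_disjoint, Finset.sdiff_union_of_subset hT.1]
    rw [Finset.sum_congr rfl this, Finset.sum_const, Finset.card_powersetCard, hW.2]
  rw [Finset.sum_congr rfl step, ← Finset.smul_sum, Uop_eq_sum]

lemma ad_Uop (k : ℕ) (y : L) :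
    LieAlgebra.ad F L ((Uop dd k) y) =
      ∑ m ∈ Finset.range (k + 1), ((-1 : ℤ) ^ m) •
        (Uop dd (k - m) * LieAlgebra.ad F L y * Uop dd m) := by
  classical
  have h0 : (Uop dd k) y = ∑ S ∈ powersetCard k (univ : Finset (Fin n)), (Pprod dd S) y := by
    rw [Uop_eq_sum]; exact LinearMap.sum_apply _ _ _
  rw [h0, ← LieHom.coe_toLinearMap, map_sum]
  simp only [LieHom.coe_toLinearMap]
  calc
    ∑ S ∈ powersetCard k (univ : Finset (Fin n)), LieAlgebra.ad F L ((Pprod dd S) y)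
        = ∑ S ∈ powersetCard k (univ : Finset (Fin n)), ∑ m ∈ Finset.range (k + 1),
            ∑ T ∈ powersetCard m S, ((-1 : ℤ) ^ m) •
              (Pprod dd (S \ T) * LieAlgebra.ad F L y * Pprod dd T) := by
        refine Finset.sum_congr rfl fun S hS => ?_
        rw [mem_powersetCard] at hS
        rw [ad_Pprod b hc S y, Finset.sum_powerset, hS.2]
        refine Finset.sum_congr rfl fun m _ => Finset.sum_congr rfl fun T hT => ?_
        rw [mem_powersetCard] at hT
        rw [hT.2]
    _ = ∑ m ∈ Finset.range (k + 1), ((-1 : ℤ) ^ m) •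
          (∑ S ∈ powersetCard k (univ : Finset (Fin n)),
            ∑ T ∈ powersetCard m S, (Pprod dd (S \ T) * LieAlgebra.ad F L y * Pprod dd T)) := by
        rw [Finset.sum_comm]
        exact Finset.sum_congr rfl fun m _ => by
          rw [Finset.smul_sum]
          exact Finset.sum_congr rfl fun S _ => by rw [Finset.smul_sum]
    _ = ∑ m ∈ Finset.range (k + 1), ((-1 : ℤ) ^ m) •
          (Uop dd (k - m) * LieAlgebra.ad F L y * Uop dd m) := by
        refine Finset.sum_congr rfl fun m hm => ?_
        rw [Finset.mem_range] at hm
        have hf : ∀ S T : Finset (Fin n), ¬ Disjoint S T →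
            Pprod dd S * LieAlgebra.ad F L y * Pprod dd T = 0 := fun S T h =>
          Pprod_mid_zero dd hc _ h (fun i _ => (hsand i).2 y)
        have hre := sum_reindex k m (by omega)
          (fun S T => Pprod dd S * LieAlgebra.ad F L y * Pprod dd T) hf
        congr 1
        rw [← hre, Uop_eq_sum, Uop_eq_sum, Finset.sum_mul, Finset.sum_mul]
        simp_rw [Finset.mul_sum]

end Lie

section AlgLemma

lemma sandwich_alg {R : Type*} [Ring R] (u₁ u₂ a₁ a₂ : R)
    (h11 : u₁ * u₁ = 2 • u₂) (h12 : u₁ * u₂ = 0) (h21 : u₂ * u₁ = 0) (h22 : u₂ * u₂ = 0)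
    (hswap1 : u₂ * a₁ * u₁ = u₁ * a₁ * u₂) (hswap2 : u₂ * a₂ * u₁ = u₁ * a₂ * u₂)
    (hz1 : u₂ * a₁ * u₂ = 0) (hz2 : u₂ * a₂ * u₂ = 0) :
    (u₂ * a₂ + a₂ * u₂ - u₁ * a₂ * u₁) * (u₂ * a₁ + a₁ * u₂ - u₁ * a₁ * u₁) =
      u₂ * a₂ * a₁ * u₂ := by
  have hu2X : u₂ * (u₂ * a₁ + a₁ * u₂ - u₁ * a₁ * u₁) = 0 := by
    have t1 : u₂ * (u₂ * a₁) = 0 := by rw [← mul_assoc, h22, zero_mul]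
    have t2 : u₂ * (a₁ * u₂) = 0 := by rw [← mul_assoc]; exact hz1
    have t3 : u₂ * (u₁ * a₁ * u₁) = 0 := by
      rw [show u₂ * (u₁ * a₁ * u₁) = u₂ * u₁ * (a₁ * u₁) by noncomm_ring, h21, zero_mul]
    rw [mul_sub, mul_add, t1, t2, t3]; simp
  have hu1X : u₁ * (u₂ * a₁ + a₁ * u₂ - u₁ * a₁ * u₁) = -(u₁ * (a₁ * u₂)) := by
    have s1 : u₁ * (u₂ * a₁) = 0 := by rw [← mul_assoc, h12, zero_mul]
    have s3 : u₁ * (u₁ * a₁ * u₁) = 2 • (u₁ * (a₁ * u₂)) := by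
      calc u₁ * (u₁ * a₁ * u₁) = (u₁ * u₁) * (a₁ * u₁) := by noncomm_ring
        _ = 2 • (u₂ * a₁ * u₁) := by rw [h11, smul_mul_assoc, mul_assoc]
        _ = 2 • (u₁ * (a₁ * u₂)) := by rw [hswap1, mul_assoc]
    rw [mul_sub, mul_add, s1, s3, zero_add, two_smul]
    abel
  have expand : (u₂ * a₂ + a₂ * u₂ - u₁ * a₂ * u₁) * (u₂ * a₁ + a₁ * u₂ - u₁ * a₁ * u₁)
      = u₂ * a₂ * (u₂ * a₁) + u₂ * a₂ * (a₁ * u₂) - u₂ * a₂ * (u₁ * a₁ * u₁)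
        + a₂ * (u₂ * (u₂ * a₁ + a₁ * u₂ - u₁ * a₁ * u₁))
        - u₁ * a₂ * (u₁ * (u₂ * a₁ + a₁ * u₂ - u₁ * a₁ * u₁)) := by
    noncomm_ring
  rw [expand, hu2X, hu1X, mul_zero, add_zero]
  have t1 : u₂ * a₂ * (u₂ * a₁) = 0 := by
    rw [show u₂ * a₂ * (u₂ * a₁) = (u₂ * a₂ * u₂) * a₁ by noncomm_ring, hz2, zero_mul]
  have t3 : u₂ * a₂ * (u₁ * a₁ * u₁) = u₁ * a₂ * (u₁ * (a₁ * u₂)) := by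
    calc u₂ * a₂ * (u₁ * a₁ * u₁) = (u₂ * a₂ * u₁) * (a₁ * u₁) := by noncomm_ring
      _ = (u₁ * a₂ * u₂) * (a₁ * u₁) := by rw [hswap2]
      _ = u₁ * a₂ * (u₂ * a₁ * u₁) := by noncomm_ring
      _ = u₁ * a₂ * (u₁ * a₁ * u₂) := by rw [hswap1]
      _ = u₁ * a₂ * (u₁ * (a₁ * u₂)) := by noncomm_ring
  rw [t1, t3, zero_add]
  noncomm_ring

end AlgLemma

/-- If `U_3 = U_4 = 0` for `U_k = U_k(ad b_1, …, ad b_n)` built from pairwise ad-commuting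
sandwiches, then `ad(y₁U₂) ∘ ad(y₂U₂) = U₂ ∘ ad(y₁) ∘ ad(y₂) ∘ U₂`
(compositions applied in the listed order). -/
theorem Uop_two_conjugation
    {F : Type*} {L : Type*} [Field F] [LieRing L] [LieAlgebra F L]
    {n : ℕ} (b : Fin n → L)
    (hcomm : ∀ i j : Fin n, Commute (LieAlgebra.ad F L (b i)) (LieAlgebra.ad F L (b j)))
    (hsand : ∀ i : Fin n, IsSandwich F (b i))
    (hU3 : Uop (fun j => LieAlgebra.ad F L (b j)) 3 = 0)
    (hU4 : Uop (fun j => LieAlgebra.ad F L (b j)) 4 = 0) :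
    ∀ y₁ y₂ : L,
      LieAlgebra.ad F L (Uop (fun j => LieAlgebra.ad F L (b j)) 2 y₂) *
        LieAlgebra.ad F L (Uop (fun j => LieAlgebra.ad F L (b j)) 2 y₁) =
      Uop (fun j => LieAlgebra.ad F L (b j)) 2 * LieAlgebra.ad F L y₂ *
        LieAlgebra.ad F L y₁ * Uop (fun j => LieAlgebra.ad F L (b j)) 2 := by
  intro y₁ y₂
  set u1 := Uop (fun j => LieAlgebra.ad F L (b j)) 1 with hu1
  set u2 := Uop (fun j => LieAlgebra.ad F L (b j)) 2 with hu2
  have h11 : u1 * u1 = 2 • u2 := by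
    have h := Uop_mul_Uop b hcomm hsand 1 1
    norm_num at h
    exact h
  have h12 : u1 * u2 = 0 := by
    have h := Uop_mul_Uop b hcomm hsand 1 2
    norm_num [hU3] at h
    exact h
  have h21 : u2 * u1 = 0 := by
    have h := Uop_mul_Uop b hcomm hsand 2 1
    norm_num [hU3] at h
    exact h
  have h22 : u2 * u2 = 0 := by
    have h := Uop_mul_Uop b hcomm hsand 2 2
    norm_num [hU4] at h
    exact h
  have key2 : ∀ y : L, LieAlgebra.ad F L (u2 y) =
      u2 * LieAlgebra.ad F L y + LieAlgebra.ad F L y * u2 -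
        u1 * LieAlgebra.ad F L y * u1 := by
    intro y
    rw [hu2, ad_Uop b hcomm hsand 2 y, Finset.sum_range_succ, Finset.sum_range_succ,
      Finset.sum_range_succ, Finset.sum_range_zero]
    norm_num [Uop_zero]
    abel
  have key3 : ∀ y : L, u2 * LieAlgebra.ad F L y * u1 = u1 * LieAlgebra.ad F L y * u2 := by
    intro y
    have h := ad_Uop b hcomm hsand 3 y
    rw [hU3] at h
    simp only [LinearMap.zero_apply, map_zero, Finset.sum_range_succ,
      Finset.sum_range_zero, hU3, Uop_zero] at h
    norm_num at h
    exact (sub_eq_zero.mp (by rw [sub_eq_neg_add]; exact h.symm)).symm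
  have key4 : ∀ y : L, u2 * LieAlgebra.ad F L y * u2 = 0 := by
    intro y
    have h := ad_Uop b hcomm hsand 4 y
    rw [hU4] at h
    simp only [LinearMap.zero_apply, map_zero, Finset.sum_range_succ,
      Finset.sum_range_zero, hU3, hU4, Uop_zero] at h
    norm_num at h
    exact h.symm
  rw [key2 y₂, key2 y₁]
  exact sandwich_alg u1 u2 (LieAlgebra.ad F L y₁) (LieAlgebra.ad F L y₂)
    h11 h12 h21 h22 (key3 y₁) (key3 y₂) (key4 y₁) (key4 y₂)
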